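/- Let f : [a,b] → ℝ be Hölder continuous of order r ∈ (0,1] with constant H and u of bounded variation on [a,b]. Then for all a ≤ t₀ ≤ x ≤ t₁ ≤ b, |∫ₐᵇ f du − [u(x) − u(a)]·f(t₀) − [u(b) − u(x)]·f(t₁)| ≤ H·( (x−a)/2 + |t₀ − (a+x)/2| )^r · V(u;[a,x]) + H·( (b−x)/2 + |t₁ − (x+b)/2| )^r · V(u;[x,b]). -/

import Mathlib

/-- A tagged partition of the interval `[a, b]`. -/
structure TaggedPartition (a b : ℝ) where
  n : ℕ
  pts : ℕ → ℝ
  tag : ℕ → ℝ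
  mono : ∀ i, pts i ≤ pts (i + 1)
  first : pts 0 = a
  last : pts n = b
  tag_mem : ∀ i, pts i ≤ tag i ∧ tag i ≤ pts (i + 1)

/-- The Riemann–Stieltjes sum of `f` with respect to `u` over a tagged partition. -/
def RSsum (f u : ℝ → ℝ) {a b : ℝ} (P : TaggedPartition a b) : ℝ :=
  ∑ i ∈ Finset.range P.n, f (P.tag i) * (u (P.pts (i + 1)) - u (P.pts i))

/-- `IsRSIntegral f u a b I` means the Riemann–Stieltjes integral `∫ₐᵇ f du` exists
and equals `I`: Riemann–Stieltjes sums converge to `I` as the mesh tends to `0`. -/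
def IsRSIntegral (f u : ℝ → ℝ) (a b I : ℝ) : Prop :=
  ∀ ε > 0, ∃ δ > 0, ∀ P : TaggedPartition a b,
    (∀ i < P.n, P.pts (i + 1) - P.pts i < δ) → |RSsum f u P - I| < ε

/-- The total (Jordan) variation of `u` on `[a, b]`. -/
noncomputable def totalVar (u : ℝ → ℝ) (a b : ℝ) : ℝ :=
  (eVariationOn u (Set.Icc a b)).toReal

lemma sum_abs_le_totalVar' (u : ℝ → ℝ) {a b c d : ℝ} (hu : BoundedVariationOn u (Set.Icc a b))
    (hac : a ≤ c) (hdb : d ≤ b) (n : ℕ) (p : ℕ → ℝ) (hmono : Monotone p)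
    (hp : ∀ i, p i ∈ Set.Icc c d) :
    ∑ i ∈ Finset.range n, |u (p (i+1)) - u (p i)| ≤ totalVar u c d := by
  have h1 := eVariationOn.sum_le (f := u) (n := n) hmono hp
  have hfin : eVariationOn u (Set.Icc c d) ≠ ⊤ := hu.mono (Set.Icc_subset_Icc hac hdb)
  have hterm : ∀ i, (edist (u (p (i+1))) (u (p i))).toReal = |u (p (i+1)) - u (p i)| := by
    intro i; rw [edist_dist, ENNReal.toReal_ofReal dist_nonneg, Real.dist_eq]
  calc ∑ i ∈ Finset.range n, |u (p (i+1)) - u (p i)|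
      = (∑ i ∈ Finset.range n, edist (u (p (i+1))) (u (p i))).toReal := by
        rw [ENNReal.toReal_sum (fun i _ => edist_ne_top _ _)]
        exact (Finset.sum_congr rfl fun i _ => (hterm i).symm)
    _ ≤ (eVariationOn u (Set.Icc c d)).toReal := ENNReal.toReal_mono hfin h1

lemma abs_le_halfwidth' {c d t s : ℝ} (hcs : c ≤ s) (hsd : s ≤ d) :
    |s - t| ≤ (d - c)/2 + |t - (c+d)/2| := by
  have h1 := le_abs_self (t - (c+d)/2)
  have h2 := neg_abs_le (t - (c+d)/2)
  rw [abs_sub_le_iff]; constructor <;> linarith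

set_option maxHeartbeats 1000000 in
theorem two_point_quadrature_refined_bounded_variation
    (a b H r t0 x t1 I : ℝ) (f u : ℝ → ℝ)
    (hr : 0 < r) (hr1 : r ≤ 1) (hH : 0 ≤ H)
    (hf : ∀ s ∈ Set.Icc a b, ∀ t ∈ Set.Icc a b, |f s - f t| ≤ H * |s - t| ^ r)
    (hu : BoundedVariationOn u (Set.Icc a b))
    (ht0 : a ≤ t0) (ht0x : t0 ≤ x) (hxt1 : x ≤ t1) (ht1 : t1 ≤ b)
    (hI : IsRSIntegral f u a b I) :
    |I - (u x - u a) * f t0 - (u b - u x) * f t1| ≤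
      H * ((x - a) / 2 + |t0 - (a + x) / 2|) ^ r * totalVar u a x +
        H * ((b - x) / 2 + |t1 - (x + b) / 2|) ^ r * totalVar u x b := by
  have hax : a ≤ x := le_trans ht0 ht0x
  have hxb : x ≤ b := le_trans hxt1 ht1
  set M1 := (x - a) / 2 + |t0 - (a + x) / 2| with hM1def
  set M2 := (b - x) / 2 + |t1 - (x + b) / 2| with hM2def
  have hM1 : 0 ≤ M1 := by
    have := abs_nonneg (t0 - (a + x) / 2); rw [hM1def]; linarith
  have hM2 : 0 ≤ M2 := by
    have := abs_nonneg (t1 - (x + b) / 2); rw [hM2def]; linarith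
  have hHM1 : 0 ≤ H * M1 ^ r := mul_nonneg hH (Real.rpow_nonneg hM1 r)
  have hHM2 : 0 ≤ H * M2 ^ r := mul_nonneg hH (Real.rpow_nonneg hM2 r)
  have bound1 : ∀ s ∈ Set.Icc a x, |f s - f t0| ≤ H * M1 ^ r := by
    intro s hs
    refine (hf s ⟨hs.1, le_trans hs.2 hxb⟩ t0 ⟨ht0, le_trans ht0x hxb⟩).trans ?_
    exact mul_le_mul_of_nonneg_left
      (Real.rpow_le_rpow (abs_nonneg _) (abs_le_halfwidth' hs.1 hs.2) hr.le) hH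
  have bound2 : ∀ s ∈ Set.Icc x b, |f s - f t1| ≤ H * M2 ^ r := by
    intro s hs
    refine (hf s ⟨le_trans hax hs.1, hs.2⟩ t1 ⟨le_trans hax hxt1, ht1⟩).trans ?_
    exact mul_le_mul_of_nonneg_left
      (Real.rpow_le_rpow (abs_nonneg _) (abs_le_halfwidth' hs.1 hs.2) hr.le) hH
  refine le_of_forall_pos_le_add fun ε hε => ?_
  obtain ⟨δ, hδ, hP⟩ := hI ε hε
  obtain ⟨N, hN⟩ := exists_nat_gt ((b - a) / δ)
  have hN0 : 0 < N := by
    have h0 : (0:ℝ) ≤ (b - a) / δ := div_nonneg (by linarith) hδ.le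
    exact_mod_cast Nat.cast_pos.mp (lt_of_le_of_lt h0 hN)
  have hNR : (0:ℝ) < N := Nat.cast_pos.mpr hN0
  have hba : b - a < δ * N := by
    have := (div_lt_iff₀ hδ).mp hN; linarith
  set d1 := (x - a) / N with hd1def
  set d2 := (b - x) / N with hd2def
  have hd1nn : 0 ≤ d1 := div_nonneg (by linarith) hNR.le
  have hd2nn : 0 ≤ d2 := div_nonneg (by linarith) hNR.le
  have hd1δ : d1 < δ := by rw [hd1def, div_lt_iff₀ hNR]; nlinarith
  have hd2δ : d2 < δ := by rw [hd2def, div_lt_iff₀ hNR]; nlinarith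
  have hNd1 : a + N * d1 = x := by rw [hd1def]; field_simp; ring
  have hNd2 : x + N * d2 = b := by rw [hd2def]; field_simp; ring
  set pts : ℕ → ℝ := fun i => if i ≤ N then a + i * d1 else x + ((i - N : ℕ) : ℝ) * d2
    with hptsdef
  have ptsa : ∀ i, i ≤ N → pts i = a + i * d1 := by intro i h; simp [hptsdef, h]
  have ptsb : ∀ j : ℕ, pts (N + j) = x + j * d2 := by
    intro j
    rcases Nat.eq_zero_or_pos j with rfl | hj
    · simp [hptsdef, hNd1]
    · have h : ¬ (N + j ≤ N) := by omega
      simp [hptsdef, h]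
  have ptsN : pts N = x := by rw [ptsa N le_rfl, hNd1]
  have memA : ∀ i, i ≤ N → pts i ∈ Set.Icc a x := by
    intro i h
    rw [ptsa i h]
    constructor
    · have := mul_nonneg (Nat.cast_nonneg (α := ℝ) i) hd1nn; linarith
    · have hiN : (i:ℝ) ≤ N := Nat.cast_le.mpr h
      have := mul_le_mul_of_nonneg_right hiN hd1nn; linarith
  have memB : ∀ j, j ≤ N → pts (N + j) ∈ Set.Icc x b := by
    intro j h
    rw [ptsb j]
    constructor
    · have := mul_nonneg (Nat.cast_nonneg (α := ℝ) j) hd2nn; linarith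
    · have hjN : (j:ℝ) ≤ N := Nat.cast_le.mpr h
      have := mul_le_mul_of_nonneg_right hjN hd2nn; linarith
  have mono : ∀ i, pts i ≤ pts (i + 1) := by
    intro i
    rcases lt_or_ge i N with hi | hi
    · rw [ptsa i hi.le, ptsa (i+1) hi]
      push_cast; linarith
    · obtain ⟨j, rfl⟩ := Nat.exists_eq_add_of_le hi
      have h1 : N + j + 1 = N + (j + 1) := by omega
      rw [ptsb j, h1, ptsb (j+1)]
      push_cast; linarith
  have ptsMono : Monotone pts := monotone_nat_of_le_succ mono
  set P : TaggedPartition a b :=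
    ⟨N + N, pts, pts, mono, by simp [hptsdef], by rw [ptsb N, hNd2],
      fun i => ⟨le_rfl, mono i⟩⟩ with hPdef
  have hmesh : ∀ i, i < P.n → P.pts (i + 1) - P.pts i < δ := by
    intro i _
    show pts (i+1) - pts i < δ
    rcases lt_or_ge i N with hi | hi
    · rw [ptsa i hi.le, ptsa (i+1) hi]; push_cast; linarith
    · obtain ⟨j, rfl⟩ := Nat.exists_eq_add_of_le hi
      have h1 : N + j + 1 = N + (j + 1) := by omega
      rw [ptsb j, h1, ptsb (j+1)]; push_cast; linarith
  have hRS : |RSsum f u P - I| < ε := hP P hmesh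
  -- split the sum
  have hsplit : RSsum f u P =
      (∑ i ∈ Finset.range N, f (pts i) * (u (pts (i+1)) - u (pts i))) +
      (∑ j ∈ Finset.range N, f (pts (N+j)) * (u (pts (N+j+1)) - u (pts (N+j)))) := by
    show (∑ i ∈ Finset.range (N + N), f (pts i) * (u (pts (i+1)) - u (pts i))) = _
    rw [Finset.sum_range_add]
  have tel1 : ∑ i ∈ Finset.range N, (u (pts (i+1)) - u (pts i)) = u x - u a := by
    rw [Finset.sum_range_sub (fun i => u (pts i)), ptsN]
    simp [hptsdef]
  have tel2 : ∑ j ∈ Finset.range N, (u (pts (N+j+1)) - u (pts (N+j))) = u b - u x := by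
    have := Finset.sum_range_sub (fun j => u (pts (N + j))) N
    rw [show (∑ j ∈ Finset.range N, (u (pts (N+j+1)) - u (pts (N+j)))) =
        ∑ j ∈ Finset.range N, (u (pts (N+(j+1))) - u (pts (N+j))) from by
          apply Finset.sum_congr rfl; intro j _; congr 2 <;> omega, this]
    rw [ptsb N, hNd2, Nat.add_zero, ptsN]
  have e1 : ∑ i ∈ Finset.range N, (f (pts i) - f t0) * (u (pts (i+1)) - u (pts i)) =
      (∑ i ∈ Finset.range N, f (pts i) * (u (pts (i+1)) - u (pts i))) - f t0 * (u x - u a) := by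
    rw [← tel1, Finset.mul_sum, ← Finset.sum_sub_distrib]
    apply Finset.sum_congr rfl; intro i _; ring
  have e2 : ∑ j ∈ Finset.range N, (f (pts (N+j)) - f t1) * (u (pts (N+j+1)) - u (pts (N+j))) =
      (∑ j ∈ Finset.range N, f (pts (N+j)) * (u (pts (N+j+1)) - u (pts (N+j)))) -
        f t1 * (u b - u x) := by
    rw [← tel2, Finset.mul_sum, ← Finset.sum_sub_distrib]
    apply Finset.sum_congr rfl; intro j _; ring
  -- bounds on the two error sums
  have hb1 : |∑ i ∈ Finset.range N, (f (pts i) - f t0) * (u (pts (i+1)) - u (pts i))| ≤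
      H * M1 ^ r * totalVar u a x := by
    calc |∑ i ∈ Finset.range N, (f (pts i) - f t0) * (u (pts (i+1)) - u (pts i))|
        ≤ ∑ i ∈ Finset.range N, |(f (pts i) - f t0) * (u (pts (i+1)) - u (pts i))| :=
          Finset.abs_sum_le_sum_abs _ _
      _ ≤ ∑ i ∈ Finset.range N, (H * M1 ^ r) * |u (pts (i+1)) - u (pts i)| := by
          apply Finset.sum_le_sum; intro i hi
          rw [abs_mul]
          exact mul_le_mul_of_nonneg_right
            (bound1 _ (memA i (Nat.le_of_lt (Finset.mem_range.mp hi)))) (abs_nonneg _)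
      _ = (H * M1 ^ r) * ∑ i ∈ Finset.range N, |u (pts (i+1)) - u (pts i)| := by
          rw [Finset.mul_sum]
      _ ≤ H * M1 ^ r * totalVar u a x := by
          apply mul_le_mul_of_nonneg_left _ hHM1
          have hsum : ∑ i ∈ Finset.range N, |u (pts (i+1)) - u (pts i)| =
              ∑ i ∈ Finset.range N, |u (pts (min (i+1) N)) - u (pts (min i N))| := by
            apply Finset.sum_congr rfl; intro i hi
            have h1 : min (i+1) N = i + 1 := by
              have := Finset.mem_range.mp hi; omega
            have h2 : min i N = i := by
              have := Finset.mem_range.mp hi; omega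
            rw [h1, h2]
          rw [hsum]
          exact sum_abs_le_totalVar' u hu le_rfl hxb N (fun i => pts (min i N))
            (ptsMono.comp (monotone_id.min monotone_const))
            (fun i => memA _ (min_le_right _ _))
  have hb2 : |∑ j ∈ Finset.range N, (f (pts (N+j)) - f t1) * (u (pts (N+j+1)) - u (pts (N+j)))| ≤
      H * M2 ^ r * totalVar u x b := by
    calc |∑ j ∈ Finset.range N, (f (pts (N+j)) - f t1) * (u (pts (N+j+1)) - u (pts (N+j)))|
        ≤ ∑ j ∈ Finset.range N, |(f (pts (N+j)) - f t1) * (u (pts (N+j+1)) - u (pts (N+j)))| :=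
          Finset.abs_sum_le_sum_abs _ _
      _ ≤ ∑ j ∈ Finset.range N, (H * M2 ^ r) * |u (pts (N+j+1)) - u (pts (N+j))| := by
          apply Finset.sum_le_sum; intro j hj
          rw [abs_mul]
          exact mul_le_mul_of_nonneg_right
            (bound2 _ (memB j (Nat.le_of_lt (Finset.mem_range.mp hj)))) (abs_nonneg _)
      _ = (H * M2 ^ r) * ∑ j ∈ Finset.range N, |u (pts (N+j+1)) - u (pts (N+j))| := by
          rw [Finset.mul_sum]
      _ ≤ H * M2 ^ r * totalVar u x b := by
          apply mul_le_mul_of_nonneg_left _ hHM2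
          have hsum : ∑ j ∈ Finset.range N, |u (pts (N+j+1)) - u (pts (N+j))| =
              ∑ j ∈ Finset.range N, |u (pts (N + min (j+1) N)) - u (pts (N + min j N))| := by
            apply Finset.sum_congr rfl; intro j hj
            have h1 : min (j+1) N = j + 1 := by
              have := Finset.mem_range.mp hj; omega
            have h2 : min j N = j := by
              have := Finset.mem_range.mp hj; omega
            rw [h1, h2]
            rfl
          rw [hsum]
          exact sum_abs_le_totalVar' u hu hax le_rfl N (fun j => pts (N + min j N))
            (ptsMono.comp ((monotone_id.min monotone_const).const_add N))
            (fun j => memB _ (min_le_right _ _))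
  have hdiff : |RSsum f u P - ((u x - u a) * f t0 + (u b - u x) * f t1)| ≤
      H * M1 ^ r * totalVar u a x + H * M2 ^ r * totalVar u x b := by
    have heq : RSsum f u P - ((u x - u a) * f t0 + (u b - u x) * f t1) =
        (∑ i ∈ Finset.range N, (f (pts i) - f t0) * (u (pts (i+1)) - u (pts i))) +
        (∑ j ∈ Finset.range N, (f (pts (N+j)) - f t1) * (u (pts (N+j+1)) - u (pts (N+j)))) := by
      rw [hsplit, e1, e2]; ring
    rw [heq]
    exact (abs_add_le _ _).trans (add_le_add hb1 hb2)
  have hfin : |I - (u x - u a) * f t0 - (u b - u x) * f t1| ≤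
      |I - RSsum f u P| + |RSsum f u P - ((u x - u a) * f t0 + (u b - u x) * f t1)| := by
    have : I - (u x - u a) * f t0 - (u b - u x) * f t1 =
        (I - RSsum f u P) + (RSsum f u P - ((u x - u a) * f t0 + (u b - u x) * f t1)) := by ring
    rw [this]; exact abs_add_le _ _
  have hIR : |I - RSsum f u P| < ε := by rw [abs_sub_comm]; exact hRS
  linarith
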